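/- Let d be a positive integer, μ a measure on ℝ^d, t ∈ ℝ, and u : ℝ × ℝ^d → ℝ differentiable at (t,x) for every x. Let η, v : ℝ → ℝ and f₁,…,f_d, q₁,…,q_d : ℝ → ℝ satisfy: η differentiable with η′ = v, and each f_k, q_k differentiable with q_k′(s) = v(s)·f_k′(s) for all s. Define the residual R(x) := ∂_t u(t,x) + Σ_k ∂_{x_k}(f_k∘u)(t,x) and the entropy rate E(x) := ∂_t(η∘u)(t,x) + Σ_k ∂_{x_k}(q_k∘u)(t,x). Let V be a set of functions ℝ^d → ℝ such that for every w ∈ V the function w·R is μ-integrable and ∫ w(x) R(x) dμ = 0, and assume E and (v∘u(t,·))·R are μ-integrable. Then for every w ∈ V: ∫ E dμ = ∫ ( v(u(t,x)) − w(x) ) R(x) dμ. -/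

import Mathlib

open MeasureTheory

/-- Theorem 1 of the paper (entropy behavior of the continuous Galerkin method):
Galerkin orthogonality `∫ w R dμ = 0` for all test functions `w ∈ V` implies
that the total entropy production equals the weighted residual
`∫ (v(u(t,·)) − w) R dμ` for any `w ∈ V`. -/
theorem entropy_balance_CG
    (d : ℕ) (hd : 0 < d) (μ : Measure (Fin d → ℝ)) (t : ℝ)
    (u : ℝ × (Fin d → ℝ) → ℝ)
    (hu : ∀ x : Fin d → ℝ, DifferentiableAt ℝ u (t, x))
    (η v : ℝ → ℝ) (f q : Fin d → ℝ → ℝ)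
    (hη : Differentiable ℝ η) (hηv : ∀ s, deriv η s = v s)
    (hf : ∀ k, Differentiable ℝ (f k))
    (hq : ∀ k, Differentiable ℝ (q k))
    (hqf : ∀ k s, deriv (q k) s = v s * deriv (f k) s)
    (R E : (Fin d → ℝ) → ℝ)
    (hR : ∀ x, R x = deriv (fun s => u (s, x)) t +
      ∑ k, deriv (fun s => f k (u (t, Function.update x k s))) (x k))
    (hE : ∀ x, E x = deriv (fun s => η (u (s, x))) t +
      ∑ k, deriv (fun s => q k (u (t, Function.update x k s))) (x k))
    (V : Set ((Fin d → ℝ) → ℝ))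
    (hVint : ∀ w ∈ V, Integrable (fun x => w x * R x) μ)
    (hGal : ∀ w ∈ V, ∫ x, w x * R x ∂μ = 0)
    (hEint : Integrable E μ)
    (hvRint : Integrable (fun x => v (u (t, x)) * R x) μ) :
    ∀ w ∈ V, ∫ x, E x ∂μ = ∫ x, (v (u (t, x)) - w x) * R x ∂μ := by
  intro w hw
  -- pointwise identity E x = v (u (t, x)) * R x
  have hkey : ∀ x, E x = v (u (t, x)) * R x := by
    intro x
    have ht : DifferentiableAt ℝ (fun s => u (s, x)) t :=
      (hu x).comp t (differentiableAt_id.prodMk (differentiableAt_const x))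
    have hgk : ∀ k : Fin d,
        DifferentiableAt ℝ (fun s => u (t, Function.update x k s)) (x k) := by
      intro k
      have h1 : DifferentiableAt ℝ (fun s : ℝ => (t, Function.update x k s)) (x k) :=
        (differentiableAt_const t).prodMk (hasDerivAt_update x k (x k)).differentiableAt
      have h2 : DifferentiableAt ℝ u ((fun s : ℝ => (t, Function.update x k s)) (x k)) := by
        simpa [Function.update_eq_self] using hu x
      exact h2.comp (x k) h1
    have hηt : deriv (fun s => η (u (s, x))) t
        = v (u (t, x)) * deriv (fun s => u (s, x)) t := by
      rw [show (fun s => η (u (s, x))) = η ∘ (fun s => u (s, x)) from rfl,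
        deriv_comp t (hη _) ht, hηv]
    have hqk : ∀ k : Fin d, deriv (fun s => q k (u (t, Function.update x k s))) (x k)
        = v (u (t, x)) * deriv (fun s => f k (u (t, Function.update x k s))) (x k) := by
      intro k
      have e1 : (fun s => q k (u (t, Function.update x k s)))
          = q k ∘ (fun s => u (t, Function.update x k s)) := rfl
      have e2 : (fun s => f k (u (t, Function.update x k s)))
          = f k ∘ (fun s => u (t, Function.update x k s)) := rfl
      rw [e1, e2, deriv_comp _ (hq k _) (hgk k), deriv_comp _ (hf k _) (hgk k), hqf]
      simp [Function.update_eq_self, mul_assoc]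
    rw [hE, hR, hηt, mul_add, Finset.mul_sum]
    congr 1
    exact Finset.sum_congr rfl fun k _ => hqk k
  have h1 : ∫ x, E x ∂μ = ∫ x, v (u (t, x)) * R x ∂μ := by
    exact integral_congr_ae (Filter.Eventually.of_forall hkey)
  rw [h1]
  have h2 : ∫ x, (v (u (t, x)) - w x) * R x ∂μ
      = (∫ x, v (u (t, x)) * R x ∂μ) - ∫ x, w x * R x ∂μ := by
    rw [← integral_sub hvRint (hVint w hw)]
    congr 1; ext x; ring
  rw [h2, hGal w hw, sub_zero]
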